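/- Let a ∈ ℝ with 0 < |a| < 1, k = 1/√(1-a²), P = [[0,1],[1,0]], and C = k·[[-ia, 1], [1, ia]]. Then Θ := C·P = k·[[1, -ia], [ia, 1]] is Hermitian, positive definite, and satisfies H†Θ = ΘH for H = [[2-ia, -1], [-1, 2+ia]]. -/

import Mathlib

open Matrix Complex ComplexOrder

noncomputable def H2 (a : ℝ) : Matrix (Fin 2) (Fin 2) ℂ :=
  !![2 - a * Complex.I, -1; -1, 2 + a * Complex.I]

theorem CPT_metric (a : ℝ) (ha : 0 < |a|) (ha' : |a| < 1) :
    let k : ℝ := 1 / Real.sqrt (1 - a ^ 2)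
    let Ch : Matrix (Fin 2) (Fin 2) ℂ :=
      (k : ℂ) • !![-(a : ℂ) * Complex.I, 1; 1, (a : ℂ) * Complex.I]
    let P : Matrix (Fin 2) (Fin 2) ℂ := !![0, 1; 1, 0]
    let Θ : Matrix (Fin 2) (Fin 2) ℂ :=
      (k : ℂ) • !![1, -(a : ℂ) * Complex.I; (a : ℂ) * Complex.I, 1]
    Ch * P = Θ ∧ Θ.IsHermitian ∧ Θ.PosDef ∧ (H2 a)ᴴ * Θ = Θ * H2 a := by
  intro k Ch P Θ
  have ha2 : a ^ 2 < 1 := by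
    have := abs_lt.mp ha'
    nlinarith
  have hsub : (0:ℝ) < 1 - a ^ 2 := by linarith
  have hk : 0 < k := by
    simp only [k]
    positivity
  have hherm : Θ.IsHermitian := by
    ext i j
    fin_cases i <;> fin_cases j <;>
      simp [Θ, Matrix.conjTranspose_apply, Complex.ext_iff]
  refine ⟨?_, hherm, Matrix.PosDef.of_dotProduct_mulVec_pos hherm ?_, ?_⟩
  · ext i j
    fin_cases i <;> fin_cases j <;>
      simp [Ch, P, Θ, Matrix.mul_apply, Fin.sum_univ_two]
  · intro x hx
    set z0 := x 0
    set z1 := x 1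
    have hsum : 0 < Complex.normSq z0 + Complex.normSq z1 := by
      rcases (by
        by_contra h
        push_neg at h
        apply hx
        funext i
        fin_cases i
        exacts [h.1, h.2] : z0 ≠ 0 ∨ z1 ≠ 0) with h | h
      · have := Complex.normSq_pos.mpr h
        have := Complex.normSq_nonneg z1
        linarith
      · have := Complex.normSq_pos.mpr h
        have := Complex.normSq_nonneg z0
        linarith
    set p := z0.re; set q := z0.im; set r := z1.re; set s := z1.im
    have hsum' : 0 < p ^ 2 + q ^ 2 + r ^ 2 + s ^ 2 := by
      simp [Complex.normSq_apply] at hsum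
      nlinarith [hsum]
    have key : 0 < p ^ 2 + q ^ 2 + r ^ 2 + s ^ 2 + 2 * a * (p * s - q * r) := by
      nlinarith [sq_nonneg (p + a * s), sq_nonneg (q - a * r), sq_nonneg (s + a * p),
        sq_nonneg (r - a * q), mul_pos hsub hsum']
    have hform : star x ⬝ᵥ (Θ *ᵥ x) =
        ((k * (p ^ 2 + q ^ 2 + r ^ 2 + s ^ 2 + 2 * a * (p * s - q * r)) : ℝ) : ℂ) := by
      simp [Θ, Matrix.mulVec, dotProduct, Fin.sum_univ_two, Complex.ext_iff,
        Complex.mul_re, Complex.mul_im, p, q, r, s, z0, z1]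
      simp only [← Complex.ofReal_pow, Complex.ofReal_re, Complex.ofReal_im]
      constructor <;> ring
    rw [hform]
    have hpos : 0 < k * (p ^ 2 + q ^ 2 + r ^ 2 + s ^ 2 + 2 * a * (p * s - q * r)) := by
      positivity
    exact_mod_cast hpos
  · ext i j
    fin_cases i <;> fin_cases j <;>
      simp [Θ, H2, Matrix.mul_apply, Fin.sum_univ_two, Matrix.conjTranspose_apply,
        Complex.ext_iff, Complex.mul_re, Complex.mul_im] <;> constructor <;> first | trivial | ring
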